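/- Assume: (i) for every a ∈ (0,1] there exist an N-node strategy ν_a with PA_N(ν_a) ≥ a and MSE_N(ν_a) = c_η^N(a), and a 2-node strategy κ_a with PA_2(κ_a) ≥ a and MSE_2(κ_a) = c_η^2(a); (ii) best responses exist in both games. Then sInf { Q_DC(MSE_N(ν), PA_N(ν)) : ν a best response among N-node strategies } = sInf { Q_DC(MSE_2(κ), PA_2(κ)) : κ a best response among 2-node strategies }: the data collector's guaranteed utility at equilibrium does not decrease as the number of adversarial nodes grows. -/

import Mathlib

open MeasureTheory ProbabilityTheory

noncomputable section

def midN (N : ℕ) (p : ℝ × (Fin (N-1) → ℝ)) : ℝ :=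
  (max p.1 (⨆ i, p.2 i) + min p.1 (⨅ i, p.2 i)) / 2

def accN (N : ℕ) (η Δ : ℝ) : Set (ℝ × (Fin (N-1) → ℝ)) :=
  {p | max p.1 (⨆ i, p.2 i) - min p.1 (⨅ i, p.2 i) ≤ η * Δ}

def PA_N (N : ℕ) (η Δ : ℝ) (μ : Measure ℝ) (ν : Measure (Fin (N-1) → ℝ)) : ℝ :=
  ((μ.prod ν) (accN N η Δ)).toReal

def MSE_N (N : ℕ) (η Δ : ℝ) (μ : Measure ℝ) (ν : Measure (Fin (N-1) → ℝ)) : ℝ :=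
  ∫ p, (midN N p) ^ 2 ∂((μ.prod ν)[|accN N η Δ])

def mid2 (p : ℝ × ℝ) : ℝ := (max p.1 p.2 + min p.1 p.2) / 2

def acc2 (η Δ : ℝ) : Set (ℝ × ℝ) := {p | max p.1 p.2 - min p.1 p.2 ≤ η * Δ}

def PA_2 (η Δ : ℝ) (μ κ : Measure ℝ) : ℝ := ((μ.prod κ) (acc2 η Δ)).toReal

def MSE_2 (η Δ : ℝ) (μ κ : Measure ℝ) : ℝ :=
  ∫ p, (mid2 p) ^ 2 ∂((μ.prod κ)[|acc2 η Δ])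

def cN (N : ℕ) (η Δ : ℝ) (μ : Measure ℝ) (α : ℝ) : ℝ :=
  sSup {r | ∃ ν : Measure (Fin (N-1) → ℝ), IsProbabilityMeasure ν ∧
    α ≤ PA_N N η Δ μ ν ∧ r = MSE_N N η Δ μ ν}

def c2 (η Δ : ℝ) (μ : Measure ℝ) (α : ℝ) : ℝ :=
  sSup {r | ∃ κ : Measure ℝ, IsProbabilityMeasure κ ∧
    α ≤ PA_2 η Δ μ κ ∧ r = MSE_2 η Δ μ κ}

def IsBestResponseN (N : ℕ) (η Δ : ℝ) (μ : Measure ℝ) (QAD : ℝ → ℝ → ℝ)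
    (ν : Measure (Fin (N-1) → ℝ)) : Prop :=
  IsProbabilityMeasure ν ∧ 0 < PA_N N η Δ μ ν ∧
    ∀ ν' : Measure (Fin (N-1) → ℝ), IsProbabilityMeasure ν' → 0 < PA_N N η Δ μ ν' →
      QAD (MSE_N N η Δ μ ν') (PA_N N η Δ μ ν') ≤ QAD (MSE_N N η Δ μ ν) (PA_N N η Δ μ ν)

def IsBestResponse2 (η Δ : ℝ) (μ : Measure ℝ) (QAD : ℝ → ℝ → ℝ) (κ : Measure ℝ) : Prop :=
  IsProbabilityMeasure κ ∧ 0 < PA_2 η Δ μ κ ∧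
    ∀ κ' : Measure ℝ, IsProbabilityMeasure κ' → 0 < PA_2 η Δ μ κ' →
      QAD (MSE_2 η Δ μ κ') (PA_2 η Δ μ κ') ≤ QAD (MSE_2 η Δ μ κ) (PA_2 η Δ μ κ)

namespace Stmt15Aux

def tval (η Δ S I : ℝ) : ℝ :=
  if η * Δ < S - I then (η+2)*Δ else if 0 ≤ S + I then S else I

def Tred (η Δ : ℝ) {k : ℕ} (x : Fin k → ℝ) : ℝ :=
  tval η Δ (⨆ i, x i) (⨅ i, x i)

def diag (k : ℕ) (t : ℝ) : Fin k → ℝ := fun _ => t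

lemma measS {k : ℕ} : Measurable fun x : Fin k → ℝ => ⨆ i, x i :=
  Measurable.iSup fun i => measurable_pi_apply i

lemma measI {k : ℕ} : Measurable fun x : Fin k → ℝ => ⨅ i, x i :=
  Measurable.iInf fun i => measurable_pi_apply i

lemma measTred {η Δ : ℝ} {k : ℕ} : Measurable (Tred η Δ (k := k)) := by
  unfold Tred tval
  exact Measurable.ite
    (measurableSet_lt measurable_const (measS.sub measI))
    measurable_const
    (Measurable.ite (measurableSet_le measurable_const (measS.add measI)) measS measI)

lemma measDiag {k : ℕ} : Measurable (diag k) :=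
  measurable_pi_lambda _ fun _ => measurable_id

lemma measMidN (N : ℕ) : Measurable (midN N) :=
  ((measurable_fst.max (measS.comp measurable_snd)).add
    (measurable_fst.min (measI.comp measurable_snd))).div_const 2

lemma measMid2 : Measurable mid2 :=
  ((measurable_fst.max measurable_snd).add (measurable_fst.min measurable_snd)).div_const 2

lemma measAccN (N : ℕ) (η Δ : ℝ) : MeasurableSet (accN N η Δ) :=
  measurableSet_le ((measurable_fst.max (measS.comp measurable_snd)).sub
    (measurable_fst.min (measI.comp measurable_snd))) measurable_const

lemma measAcc2 (η Δ : ℝ) : MeasurableSet (acc2 η Δ) :=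
  measurableSet_le ((measurable_fst.max measurable_snd).sub
    (measurable_fst.min measurable_snd)) measurable_const

lemma hIS {k : ℕ} (hk : 0 < k) (x : Fin k → ℝ) : (⨅ i, x i) ≤ ⨆ i, x i := by
  have i0 : Fin k := ⟨0, hk⟩
  calc (⨅ i, x i) ≤ x i0 := ciInf_le (Set.Finite.bddBelow (Set.finite_range x)) i0
    _ ≤ ⨆ i, x i := le_ciSup (Set.Finite.bddAbove (Set.finite_range x)) i0

/-- unfold conditional expectation -/
lemma mse_eq {α : Type*} [MeasurableSpace α] (P : Measure α) (s : Set α) (f : α → ℝ) :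
    ∫ x, f x ∂(P[|s]) = ((P s)⁻¹).toReal * ∫ x, f x ∂(P.restrict s) := by
  rw [ProbabilityTheory.cond, integral_smul_measure, smul_eq_mul]

lemma acc_iff {η Δ : ℝ} (hΔ : 0 < Δ) (hη : 2 ≤ η) {S I n : ℝ} (hIS : I ≤ S)
    (hn1 : -Δ ≤ n) (hn2 : n ≤ Δ) :
    (max n S - min n I ≤ η*Δ) ↔
      (max n (tval η Δ S I) - min n (tval η Δ S I) ≤ η*Δ) := by
  have h2Δ : 2*Δ ≤ η*Δ := by nlinarith
  unfold tval
  split_ifs with hC hA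
  · constructor
    · intro h
      exact absurd h (by have h1 := le_max_right n S; have h2 := min_le_right n I; push_neg; linarith)
    · intro h
      have hnt : n ≤ (η+2)*Δ := by nlinarith
      rw [max_eq_right hnt, min_eq_left hnt] at h
      exact absurd h (by push_neg; linarith)
  · push_neg at hC
    constructor
    · intro h
      have : min n I ≤ min n S := min_le_min le_rfl hIS
      linarith
    · intro h
      rcases le_total n I with h1 | h1
      · rw [min_eq_left h1]
        rw [min_eq_left (h1.trans hIS)] at h
        linarith
      · rw [min_eq_right h1]
        rcases le_total n S with h2 | h2
        · rw [max_eq_right h2] at h ⊢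
          linarith
        · rw [max_eq_left h2] at h ⊢
          by_contra hcon
          push_neg at hcon
          linarith
  · push_neg at hC hA
    constructor
    · intro h
      have : max n I ≤ max n S := max_le_max le_rfl hIS
      linarith
    · intro h
      rcases le_total S n with h1 | h1
      · rw [max_eq_left h1]
        rw [max_eq_left (hIS.trans h1)] at h
        linarith
      · rw [max_eq_right h1]
        rcases le_total I n with h2 | h2
        · rw [min_eq_right h2] at h ⊢
          linarith
        · rw [min_eq_left h2] at h ⊢
          by_contra hcon
          push_neg at hcon
          linarith

lemma dom {η Δ : ℝ} {S I n : ℝ} (hIS : I ≤ S)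
    (hacc : max n S - min n I ≤ η*Δ) :
    ((max n S + min n I)/2)^2
      ≤ ((max n (tval η Δ S I) + min n (tval η Δ S I))/2)^2 := by
  have hC : ¬ η * Δ < S - I := by
    push_neg
    have h1 := le_max_right n S; have h2 := min_le_right n I; linarith
  unfold tval
  rw [if_neg hC]
  split_ifs with hA
  · rcases le_total n I with h1 | h1
    · rw [min_eq_left h1, min_eq_left (h1.trans hIS)]
    · rw [min_eq_right h1]
      have hx0 : 0 ≤ (max n S + I)/2 := by
        have := le_max_right n S; linarith
      have hle : (max n S + I)/2 ≤ (max n S + min n S)/2 := by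
        have : I ≤ min n S := le_min h1 hIS
        linarith
      nlinarith
  · push_neg at hA
    rcases le_total S n with h1 | h1
    · rw [max_eq_left h1, max_eq_left (hIS.trans h1)]
    · rw [max_eq_right h1]
      have hx0 : (S + min n I)/2 ≤ 0 := by
        have := min_le_right n I; linarith
      have hle : (max n I + min n I)/2 ≤ (S + min n I)/2 := by
        have : max n I ≤ S := max_le h1 hIS
        linarith
      nlinarith

lemma midN_bd {η Δ : ℝ} (hΔ : 0 < Δ) (hη : 2 ≤ η) {S I n : ℝ}
    (hacc : max n S - min n I ≤ η*Δ) (hn1 : -Δ ≤ n) (hn2 : n ≤ Δ) :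
    |(max n S + min n I)/2| ≤ (2+η)*Δ := by
  have h0 : 0 ≤ η*Δ := by nlinarith
  have h1 : min n I ≤ n := min_le_left n I
  have h2 : n ≤ max n S := le_max_left n S
  rw [abs_le]
  constructor <;> nlinarith

lemma mid2_bd {η Δ : ℝ} (hΔ : 0 < Δ) (hη : 2 ≤ η) {S I n : ℝ} (hIS : I ≤ S)
    (hacc : max n S - min n I ≤ η*Δ) (hn1 : -Δ ≤ n) (hn2 : n ≤ Δ) :
    |(max n (tval η Δ S I) + min n (tval η Δ S I))/2| ≤ (2+η)*Δ := by
  have h0 : 0 ≤ η*Δ := by nlinarith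
  have hC : ¬ η * Δ < S - I := by
    push_neg
    have h1 := le_max_right n S; have h2 := min_le_right n I; linarith
  have h1 : min n I ≤ n := min_le_left n I
  have h2 : n ≤ max n S := le_max_left n S
  have hSle : S ≤ max n S := le_max_right n S
  have hIle : min n I ≤ I := min_le_right n I
  unfold tval
  rw [if_neg hC]
  have key : ∀ t : ℝ, I ≤ t → t ≤ S → |(max n t + min n t)/2| ≤ (2+η)*Δ := by
    intro t ht1 ht2
    rw [max_add_min, abs_le]
    constructor <;> nlinarith
  split_ifs with hA
  · exact key S hIS le_rfl
  · exact key I le_rfl hIS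


end Stmt15Aux

namespace Stmt15Aux

variable {η Δ : ℝ}

lemma prod_ae_Icc {ν' : Type*} [MeasurableSpace ν'] (hΔ : 0 < Δ)
    (μ : Measure ℝ) [IsProbabilityMeasure μ] (hμ : μ (Set.Icc (-Δ) Δ) = 1)
    (ν : Measure ν') [IsProbabilityMeasure ν] :
    ∀ᵐ p ∂(μ.prod ν), p.1 ∈ Set.Icc (-Δ) Δ := by
  rw [ae_iff]
  have hsub : {p : ℝ × ν' | ¬ p.1 ∈ Set.Icc (-Δ) Δ} ⊆ (Set.Icc (-Δ) Δ)ᶜ ×ˢ Set.univ := by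
    intro p hp; exact ⟨hp, trivial⟩
  refine le_antisymm (le_trans (measure_mono hsub) ?_) zero_le
  rw [Measure.prod_prod, measure_univ, mul_one,
    measure_compl measurableSet_Icc (measure_ne_top μ _), hμ, measure_univ, tsub_self]

lemma reduce {N : ℕ} (hN : 2 ≤ N) (hΔ : 0 < Δ) (hη : 2 ≤ η)
    (μ : Measure ℝ) [IsProbabilityMeasure μ] (hμ : μ (Set.Icc (-Δ) Δ) = 1)
    (ν : Measure (Fin (N-1) → ℝ)) [IsProbabilityMeasure ν] :
    IsProbabilityMeasure (ν.map (Tred η Δ)) ∧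
    PA_2 η Δ μ (ν.map (Tred η Δ)) = PA_N N η Δ μ ν ∧
    MSE_N N η Δ μ ν ≤ MSE_2 η Δ μ (ν.map (Tred η Δ)) := by
  have hk : 0 < N - 1 := by omega
  have hT : Measurable (Tred η Δ (k := N-1)) := measTred
  set g : ℝ × (Fin (N-1) → ℝ) → ℝ × ℝ := Prod.map id (Tred η Δ) with hgdef
  have hg : Measurable g := measurable_id.prodMap hT
  set P : Measure (ℝ × (Fin (N-1) → ℝ)) := μ.prod ν with hPdef
  have hprod : μ.prod (ν.map (Tred η Δ)) = P.map g := by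
    have := Measure.map_prod_map μ ν measurable_id hT
    rwa [Measure.map_id] at this
  set E : Set (ℝ × (Fin (N-1) → ℝ)) := g ⁻¹' acc2 η Δ with hEdef
  set F : Set (ℝ × (Fin (N-1) → ℝ)) := accN N η Δ with hFdef
  have hFmeas : MeasurableSet F := measAccN N η Δ
  have haeIcc : ∀ᵐ p ∂P, p.1 ∈ Set.Icc (-Δ) Δ := prod_ae_Icc hΔ μ hμ ν
  have hEF : ∀ p : ℝ × (Fin (N-1) → ℝ), p.1 ∈ Set.Icc (-Δ) Δ → (p ∈ E ↔ p ∈ F) := by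
    rintro ⟨n, x⟩ hn
    have : (n, x) ∈ E ↔ max n (Tred η Δ x) - min n (Tred η Δ x) ≤ η * Δ := Iff.rfl
    rw [this]
    have : (n, x) ∈ F ↔ max n (⨆ i, x i) - min n (⨅ i, x i) ≤ η * Δ := Iff.rfl
    rw [this]
    exact (acc_iff hΔ hη (hIS hk x) hn.1 hn.2).symm
  have haeEF : E =ᵐ[P] F := by
    rw [Filter.eventuallyEq_set]
    filter_upwards [haeIcc] with p hp
    exact hEF p hp
  have hPEF : P E = P F := measure_congr haeEF
  have hκprob : IsProbabilityMeasure (ν.map (Tred η Δ)) :=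
    Measure.isProbabilityMeasure_map hT.aemeasurable
  have hmapacc : (P.map g) (acc2 η Δ) = P F := by
    rw [Measure.map_apply hg (measAcc2 η Δ)]; exact hPEF
  refine ⟨hκprob, ?_, ?_⟩
  · unfold PA_2 PA_N
    rw [hprod, hmapacc]
  · -- MSE inequality
    unfold MSE_2 MSE_N
    rw [hprod, mse_eq, mse_eq, hmapacc]
    have hrestr : (P.map g).restrict (acc2 η Δ) = (P.restrict E).map g := by
      rw [Measure.restrict_map hg (measAcc2 η Δ)]
    have hEr : P.restrict E = P.restrict F := Measure.restrict_congr_set haeEF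
    rw [hrestr, hEr,
      integral_map hg.aemeasurable ((measMid2.pow_const 2).aestronglyMeasurable)]
    set B : ℝ := (2+η)*Δ with hBdef
    -- pointwise facts on F ∩ Icc
    have hboundN : ∀ᵐ p ∂P.restrict F, ‖midN N p ^ 2‖ ≤ B ^ 2 := by
      rw [ae_restrict_iff' hFmeas]
      filter_upwards [haeIcc] with p hp hpF
      have hb := midN_bd hΔ hη (hpF : max p.1 (⨆ i, p.2 i) - min p.1 (⨅ i, p.2 i) ≤ η*Δ)
        hp.1 hp.2
      calc ‖midN N p ^ 2‖ = |midN N p| ^ 2 := by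
            rw [Real.norm_eq_abs, abs_pow, sq_abs, ← sq_abs]
        _ ≤ B ^ 2 := pow_le_pow_left₀ (abs_nonneg _) hb 2
    have hbound2 : ∀ᵐ p ∂P.restrict F, ‖mid2 (g p) ^ 2‖ ≤ B ^ 2 := by
      rw [ae_restrict_iff' hFmeas]
      filter_upwards [haeIcc] with p hp hpF
      have hb := mid2_bd hΔ hη (hIS hk p.2)
        (hpF : max p.1 (⨆ i, p.2 i) - min p.1 (⨅ i, p.2 i) ≤ η*Δ) hp.1 hp.2
      calc ‖mid2 (g p) ^ 2‖ = |mid2 (g p)| ^ 2 := by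
            rw [Real.norm_eq_abs, abs_pow, sq_abs, ← sq_abs]
        _ ≤ B ^ 2 := pow_le_pow_left₀ (abs_nonneg _) hb 2
    have hintN : Integrable (fun p => midN N p ^ 2) (P.restrict F) :=
      Integrable.mono' (integrable_const (B ^ 2))
        ((measMidN N).pow_const 2).aestronglyMeasurable hboundN
    have hint2 : Integrable (fun p => mid2 (g p) ^ 2) (P.restrict F) :=
      Integrable.mono' (integrable_const (B ^ 2))
        ((measMid2.comp hg).pow_const 2).aestronglyMeasurable hbound2
    have hle : (fun p => midN N p ^ 2) ≤ᵐ[P.restrict F] fun p => mid2 (g p) ^ 2 := by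
      rw [Filter.EventuallyLE, ae_restrict_iff' hFmeas]
      refine Filter.Eventually.of_forall fun p hpF => ?_
      exact dom (hIS hk p.2) (hpF : max p.1 (⨆ i, p.2 i) - min p.1 (⨅ i, p.2 i) ≤ η*Δ)
    exact mul_le_mul_of_nonneg_left (integral_mono_ae hintN hint2 hle) ENNReal.toReal_nonneg

end Stmt15Aux

namespace Stmt15Aux

lemma embed {η Δ : ℝ} {N : ℕ} (hN : 2 ≤ N)
    (μ : Measure ℝ) [IsProbabilityMeasure μ]
    (κ : Measure ℝ) [IsProbabilityMeasure κ] :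
    IsProbabilityMeasure (κ.map (diag (N-1))) ∧
    PA_N N η Δ μ (κ.map (diag (N-1))) = PA_2 η Δ μ κ ∧
    MSE_N N η Δ μ (κ.map (diag (N-1))) = MSE_2 η Δ μ κ := by
  haveI : Nonempty (Fin (N-1)) := ⟨⟨0, by omega⟩⟩
  have hd : Measurable (diag (N-1)) := measDiag
  set g : ℝ × ℝ → ℝ × (Fin (N-1) → ℝ) := Prod.map id (diag (N-1)) with hgdef
  have hg : Measurable g := measurable_id.prodMap hd
  set Q : Measure (ℝ × ℝ) := μ.prod κ with hQdef
  have hprod : μ.prod (κ.map (diag (N-1))) = Q.map g := by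
    have := Measure.map_prod_map μ κ measurable_id hd
    rwa [Measure.map_id] at this
  have hpre : g ⁻¹' accN N η Δ = acc2 η Δ := by
    ext ⟨n, t⟩
    simp only [Set.mem_preimage, hgdef, Prod.map, id_eq, accN, acc2, Set.mem_setOf_eq,
      diag, ciSup_const, ciInf_const]
  have hcomp : ∀ p : ℝ × ℝ, midN N (g p) = mid2 p := by
    rintro ⟨n, t⟩
    simp only [hgdef, Prod.map, id_eq, midN, mid2, diag, ciSup_const, ciInf_const]
  have hprob : IsProbabilityMeasure (κ.map (diag (N-1))) :=
    Measure.isProbabilityMeasure_map hd.aemeasurable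
  have happ : (Q.map g) (accN N η Δ) = Q (acc2 η Δ) := by
    rw [Measure.map_apply hg (measAccN N η Δ), hpre]
  refine ⟨hprob, ?_, ?_⟩
  · unfold PA_N PA_2
    rw [hprod, happ]
  · unfold MSE_N MSE_2
    rw [hprod, mse_eq, mse_eq, happ,
      Measure.restrict_map hg (measAccN N η Δ), hpre,
      integral_map hg.aemeasurable (((measMidN N).pow_const 2).aestronglyMeasurable)]
    congr 1
    exact integral_congr_ae (Filter.Eventually.of_forall fun p => by simp only []; rw [hcomp p])

end Stmt15Aux

open Stmt15Aux in
theorem stmt15 {N : ℕ} (hN : 2 ≤ N) {η Δ : ℝ} (hΔ : 0 < Δ) (hη : 2 ≤ η)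
    (μ : Measure ℝ) [IsProbabilityMeasure μ] (hμ : μ (Set.Icc (-Δ) Δ) = 1)
    (QAD : ℝ → ℝ → ℝ)
    (hQ1 : ∀ y : ℝ, StrictMono fun x => QAD x y) (hQ2 : ∀ x : ℝ, StrictMono (QAD x))
    (QDC : ℝ → ℝ → ℝ)
    (hD1 : ∀ y : ℝ, Antitone fun x => QDC x y) (hD2 : ∀ x : ℝ, Monotone (QDC x))
    (hattN : ∀ a : ℝ, 0 < a → a ≤ 1 → ∃ ν : Measure (Fin (N-1) → ℝ),
      IsProbabilityMeasure ν ∧ a ≤ PA_N N η Δ μ ν ∧ MSE_N N η Δ μ ν = cN N η Δ μ a)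
    (hatt2 : ∀ a : ℝ, 0 < a → a ≤ 1 → ∃ κ : Measure ℝ,
      IsProbabilityMeasure κ ∧ a ≤ PA_2 η Δ μ κ ∧ MSE_2 η Δ μ κ = c2 η Δ μ a)
    (hexN : ∃ ν : Measure (Fin (N-1) → ℝ), IsBestResponseN N η Δ μ QAD ν)
    (hex2 : ∃ κ : Measure ℝ, IsBestResponse2 η Δ μ QAD κ) :
    sInf {u : ℝ | ∃ ν : Measure (Fin (N-1) → ℝ), IsBestResponseN N η Δ μ QAD ν ∧
        u = QDC (MSE_N N η Δ μ ν) (PA_N N η Δ μ ν)} =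
      sInf {u : ℝ | ∃ κ : Measure ℝ, IsBestResponse2 η Δ μ QAD κ ∧
        u = QDC (MSE_2 η Δ μ κ) (PA_2 η Δ μ κ)} := by
  have hset : {u : ℝ | ∃ ν : Measure (Fin (N-1) → ℝ), IsBestResponseN N η Δ μ QAD ν ∧
        u = QDC (MSE_N N η Δ μ ν) (PA_N N η Δ μ ν)} =
      {u : ℝ | ∃ κ : Measure ℝ, IsBestResponse2 η Δ μ QAD κ ∧
        u = QDC (MSE_2 η Δ μ κ) (PA_2 η Δ μ κ)} := by
    ext u
    constructor
    · rintro ⟨ν, ⟨hνp, hνpos, hνopt⟩, rfl⟩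
      haveI := hνp
      obtain ⟨hκp, hPA, hMSE⟩ := reduce hN hΔ hη μ hμ ν
      haveI := hκp
      obtain ⟨hν2p, hPA2, hMSE2⟩ := embed (η := η) (Δ := Δ) hN μ (ν.map (Tred η Δ))
      have hpos2 : 0 < PA_2 η Δ μ (ν.map (Tred η Δ)) := by rw [hPA]; exact hνpos
      have hb := hνopt ((ν.map (Tred η Δ)).map (diag (N-1))) hν2p
        (by rw [hPA2]; exact hpos2)
      rw [hMSE2, hPA2, hPA] at hb
      have hMSEeq : MSE_2 η Δ μ (ν.map (Tred η Δ)) = MSE_N N η Δ μ ν :=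
        le_antisymm ((hQ1 (PA_N N η Δ μ ν)).le_iff_le.mp hb) hMSE
      refine ⟨ν.map (Tred η Δ), ⟨hκp, hpos2, ?_⟩, by rw [hMSEeq, hPA]⟩
      intro κ' hκ'p hκ'pos
      haveI := hκ'p
      obtain ⟨hν'p, hPA', hMSE'⟩ := embed (η := η) (Δ := Δ) hN μ κ'
      have h := hνopt (κ'.map (diag (N-1))) hν'p (by rw [hPA']; exact hκ'pos)
      rw [hMSE', hPA'] at h
      rw [hMSEeq, hPA]
      exact h
    · rintro ⟨κ, ⟨hκp, hκpos, hκopt⟩, rfl⟩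
      haveI := hκp
      obtain ⟨hνp, hPA, hMSE⟩ := embed (η := η) (Δ := Δ) hN μ κ
      refine ⟨κ.map (diag (N-1)), ⟨hνp, by rw [hPA]; exact hκpos, ?_⟩,
        by rw [hPA, hMSE]⟩
      intro ν' hν'p hν'pos
      haveI := hν'p
      obtain ⟨hκ'p, hPA', hMSE'⟩ := reduce hN hΔ hη μ hμ ν'
      calc QAD (MSE_N N η Δ μ ν') (PA_N N η Δ μ ν')
          ≤ QAD (MSE_2 η Δ μ (ν'.map (Tred η Δ))) (PA_N N η Δ μ ν') :=
            (hQ1 _).monotone hMSE'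
        _ = QAD (MSE_2 η Δ μ (ν'.map (Tred η Δ))) (PA_2 η Δ μ (ν'.map (Tred η Δ))) := by
            rw [hPA']
        _ ≤ QAD (MSE_2 η Δ μ κ) (PA_2 η Δ μ κ) := hκopt _ hκ'p (by rw [hPA']; exact hν'pos)
        _ = QAD (MSE_N N η Δ μ (κ.map (diag (N-1)))) (PA_N N η Δ μ (κ.map (diag (N-1)))) := by
            rw [hPA, hMSE]
  rw [hset]
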